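/- Let (J_t)_{t≥0} be a monotone radial jump process on ℤ² started at the origin. Then for every pair u, v ∈ ℤ² with ‖v‖_∞ ≥ ‖u‖₁ and every t ≥ 0, P(J_t = u) ≥ P(J_t = v). -/

import Mathlib

/-- Manhattan (L¹) distance on the grid `ℤ²`. -/
def dist1 (u v : ℤ × ℤ) : ℕ := (u.1 - v.1).natAbs + (u.2 - v.2).natAbs

namespace Stmt11Aux

open scoped ENNReal

/-- L¹ norm. -/
def n1 (w : ℤ × ℤ) : ℕ := w.1.natAbs + w.2.natAbs

/-- L∞ norm. -/
def ninf (w : ℤ × ℤ) : ℕ := max w.1.natAbs w.2.natAbs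

/-- The invariant satisfied by the distributions of a monotone radial process. -/
structure Inv {M : Type*} [Preorder M] (f : ℤ × ℤ → M) : Prop where
  sx : ∀ x y : ℤ, f (-x, y) = f (x, y)
  sy : ∀ x y : ℤ, f (x, -y) = f (x, y)
  sw : ∀ x y : ℤ, f (y, x) = f (x, y)
  pv : ∀ k x y : ℤ, 1 ≤ k → 2 * x ≤ k → f (k - x, y) ≤ f (x, y)
  pa : ∀ c x y : ℤ, 1 ≤ c → x - y ≤ c → f (y + c, x - c) ≤ f (x, y)

section Mono

variable {M : Type*} [Preorder M] {f : ℤ × ℤ → M}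

theorem Inv.abs (hf : Inv f) (x y : ℤ) : f (x, y) = f (x.natAbs, y.natAbs) := by
  have h1 : f (x, y) = f (x.natAbs, y) := by
    rcases le_or_gt 0 x with h | h
    · rw [Int.natAbs_of_nonneg h]
    · have e : ((x.natAbs : ℤ)) = -x := by omega
      rw [e]
      exact (hf.sx x y).symm
  rw [h1]
  rcases le_or_gt 0 y with h | h
  · rw [Int.natAbs_of_nonneg h]
  · have e : ((y.natAbs : ℤ)) = -y := by omega
    rw [e]
    exact (hf.sy (x.natAbs : ℤ) y).symm

theorem Inv.sortedLe (hf : Inv f) {c d a b : ℕ} (hdc : d ≤ c) (hba : b ≤ a)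
    (h : c + d ≤ a) : f ((a : ℤ), (b : ℤ)) ≤ f ((c : ℤ), (d : ℤ)) := by
  have step1 : f ((a : ℤ), (b : ℤ)) ≤ f ((a : ℤ), 0) := by
    rcases Nat.eq_zero_or_pos b with hb | hb
    · subst hb; exact le_rfl
    · have h1 : f ((b : ℤ), (a : ℤ)) ≤ f (0, (a : ℤ)) := by
        have := hf.pv (b : ℤ) 0 (a : ℤ) (by exact_mod_cast hb) (by omega)
        simpa using this
      calc f ((a : ℤ), (b : ℤ)) = f ((b : ℤ), (a : ℤ)) := (hf.sw (a : ℤ) (b : ℤ)).symm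
        _ ≤ f (0, (a : ℤ)) := h1
        _ = f ((a : ℤ), 0) := hf.sw (a : ℤ) 0
  have step2 : f ((a : ℤ), 0) ≤ f ((c : ℤ) + (d : ℤ), 0) := by
    rcases Nat.eq_zero_or_pos a with ha | ha
    · have hc : c = 0 := by omega
      have hd : d = 0 := by omega
      subst ha hc hd; exact le_rfl
    · have := hf.pv ((a : ℤ) + ((c : ℤ) + (d : ℤ))) ((c : ℤ) + (d : ℤ)) 0
        (by push_cast; omega) (by push_cast; omega)
      simpa using this
  have step3 : f ((c : ℤ) + (d : ℤ), 0) ≤ f ((c : ℤ), (d : ℤ)) := by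
    rcases Nat.eq_zero_or_pos c with hc | hc
    · have hd : d = 0 := by omega
      subst hc hd; exact le_rfl
    · have := hf.pa (c : ℤ) (c : ℤ) (d : ℤ) (by exact_mod_cast hc) (by push_cast; omega)
      have e1 : (d : ℤ) + (c : ℤ) = (c : ℤ) + (d : ℤ) := by ring
      have e2 : (c : ℤ) - (c : ℤ) = 0 := by ring
      rwa [e1, e2] at this
  exact le_trans step1 (le_trans step2 step3)

/-- The key consequence of the invariant:  `f` is larger at points of small L¹ norm
than at points of large L∞ norm. -/
theorem Inv.mono (hf : Inv f) (u v : ℤ × ℤ) (h : n1 u ≤ ninf v) : f v ≤ f u := by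
  obtain ⟨x, y⟩ := u
  obtain ⟨z, w⟩ := v
  have hu : f (x, y) = f ((x.natAbs : ℤ), (y.natAbs : ℤ)) := hf.abs x y
  have hv : f (z, w) = f ((z.natAbs : ℤ), (w.natAbs : ℤ)) := hf.abs z w
  rw [hu, hv]
  simp only [n1, ninf] at h
  rcases le_total y.natAbs x.natAbs with hxy | hxy <;>
    rcases le_total w.natAbs z.natAbs with hzw | hzw
  · exact hf.sortedLe hxy hzw (by omega)
  · calc f ((z.natAbs : ℤ), (w.natAbs : ℤ)) = f ((w.natAbs : ℤ), (z.natAbs : ℤ)) :=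
        (hf.sw _ _).symm
      _ ≤ _ := hf.sortedLe hxy hzw (by omega)
  · calc f ((z.natAbs : ℤ), (w.natAbs : ℤ)) ≤ f ((y.natAbs : ℤ), (x.natAbs : ℤ)) :=
        hf.sortedLe hxy hzw (by omega)
      _ = f ((x.natAbs : ℤ), (y.natAbs : ℤ)) := hf.sw _ _
  · calc f ((z.natAbs : ℤ), (w.natAbs : ℤ)) = f ((w.natAbs : ℤ), (z.natAbs : ℤ)) :=
        (hf.sw _ _).symm
      _ ≤ f ((y.natAbs : ℤ), (x.natAbs : ℤ)) := hf.sortedLe hxy hzw (by omega)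
      _ = f ((x.natAbs : ℤ), (y.natAbs : ℤ)) := hf.sw _ _

end Mono

/-! ### The one–step kernel at the `ℝ≥0∞` level -/

noncomputable def S (g : ℤ × ℤ → ℝ≥0∞) (ρ' : ℕ → ℝ≥0∞) (x : ℤ × ℤ) : ℝ≥0∞ :=
  ∑' w : ℤ × ℤ, g w * ρ' (dist1 w x)

/-- Reflection across a vertical line. -/
def vEq (k : ℤ) : (ℤ × ℤ) ≃ (ℤ × ℤ) where
  toFun w := (k - w.1, w.2)
  invFun w := (k - w.1, w.2)
  left_inv w := by simp
  right_inv w := by simp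

/-- Reflection across an antidiagonal line. -/
def aEq (c : ℤ) : (ℤ × ℤ) ≃ (ℤ × ℤ) where
  toFun w := (w.2 + c, w.1 - c)
  invFun w := (w.2 + c, w.1 - c)
  left_inv w := by simp
  right_inv w := by simp

def negxEq : (ℤ × ℤ) ≃ (ℤ × ℤ) where
  toFun w := (-w.1, w.2)
  invFun w := (-w.1, w.2)
  left_inv w := by simp
  right_inv w := by simp

def negyEq : (ℤ × ℤ) ≃ (ℤ × ℤ) where
  toFun w := (w.1, -w.2)
  invFun w := (w.1, -w.2)
  left_inv w := by simp
  right_inv w := by simp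

def swEq : (ℤ × ℤ) ≃ (ℤ × ℤ) where
  toFun w := (w.2, w.1)
  invFun w := (w.2, w.1)
  left_inv w := by simp
  right_inv w := by simp

theorem S_symm {g : ℤ × ℤ → ℝ≥0∞} {ρ' : ℕ → ℝ≥0∞} (e : (ℤ × ℤ) ≃ (ℤ × ℤ))
    (hiso : ∀ a b, dist1 (e a) (e b) = dist1 a b) (hge : ∀ w, g (e w) = g w) (x : ℤ × ℤ) :
    S g ρ' (e x) = S g ρ' x := by
  rw [S, ← e.tsum_eq (fun w => g w * ρ' (dist1 w (e x)))]
  exact tsum_congr fun w => by rw [hge, hiso]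

/-- The reflection/pairing argument. -/
theorem pair_le (g : ℤ × ℤ → ℝ≥0∞) (ρ' : ℕ → ℝ≥0∞) (hρ : Antitone ρ')
    (σ : (ℤ × ℤ) ≃ (ℤ × ℤ)) (hσσ : ∀ w, σ (σ w) = w)
    (hiso : ∀ a b, dist1 (σ a) (σ b) = dist1 a b)
    (P : ℤ × ℤ → Prop) (htot : ∀ w, ¬ P w → P (σ w)) (u : ℤ × ℤ)
    (hgP : ∀ w, P w → g (σ w) ≤ g w)
    (hdP : ∀ w, P w → dist1 w u ≤ dist1 w (σ u)) :
    S g ρ' (σ u) ≤ S g ρ' u := by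
  classical
  set F : ℤ × ℤ → ℝ≥0∞ := fun w => g w * ρ' (dist1 w u) with hF
  set G : ℤ × ℤ → ℝ≥0∞ := fun w => g w * ρ' (dist1 w (σ u)) with hG
  have key : ∀ w, P w → G w + G (σ w) ≤ F w + F (σ w) := by
    intro w hw
    have h1 : dist1 (σ w) (σ u) = dist1 w u := hiso w u
    have h2 : dist1 (σ w) u = dist1 w (σ u) := by
      conv_lhs => rw [← hσσ u]
      rw [hiso]
    have hgw : g (σ w) ≤ g w := hgP w hw
    have hρw : ρ' (dist1 w (σ u)) ≤ ρ' (dist1 w u) := hρ (hdP w hw)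
    obtain ⟨e, he⟩ := exists_add_of_le hρw
    simp only [hF, hG, h1, h2, he]
    calc g w * ρ' (dist1 w (σ u)) + g (σ w) * (ρ' (dist1 w (σ u)) + e)
        = (g w * ρ' (dist1 w (σ u)) + g (σ w) * ρ' (dist1 w (σ u))) + g (σ w) * e := by ring
      _ ≤ (g w * ρ' (dist1 w (σ u)) + g (σ w) * ρ' (dist1 w (σ u))) + g w * e :=
        add_le_add_right (mul_le_mul' hgw le_rfl) _
      _ = g w * (ρ' (dist1 w (σ u)) + e) + g (σ w) * ρ' (dist1 w (σ u)) := by ring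
  have keyall : ∀ w, G w + G (σ w) ≤ F w + F (σ w) := by
    intro w
    by_cases hw : P w
    · exact key w hw
    · have h := key (σ w) (htot w hw)
      rw [hσσ w] at h
      calc G w + G (σ w) = G (σ w) + G w := add_comm _ _
        _ ≤ F (σ w) + F w := h
        _ = F w + F (σ w) := add_comm _ _
  have h2 : (2 : ℝ≥0∞) * ∑' w, G w ≤ 2 * ∑' w, F w := by
    have eG : ∑' w, G (σ w) = ∑' w, G w := σ.tsum_eq G
    have eF : ∑' w, F (σ w) = ∑' w, F w := σ.tsum_eq F
    calc (2 : ℝ≥0∞) * ∑' w, G w = ∑' w, G w + ∑' w, G (σ w) := by rw [eG, two_mul]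
      _ = ∑' w, (G w + G (σ w)) := ENNReal.tsum_add.symm
      _ ≤ ∑' w, (F w + F (σ w)) := ENNReal.tsum_le_tsum keyall
      _ = ∑' w, F w + ∑' w, F (σ w) := ENNReal.tsum_add
      _ = 2 * ∑' w, F w := by rw [eF, two_mul]
  exact (ENNReal.mul_le_mul_iff_right two_ne_zero (by norm_num)).mp h2

theorem S_inv {g : ℤ × ℤ → ℝ≥0∞} {ρ' : ℕ → ℝ≥0∞} (hρ : Antitone ρ') (hg : Inv g) :
    Inv (S g ρ') := by
  constructor
  · intro x y
    exact S_symm negxEq (fun a b => by simp only [negxEq, Equiv.coe_fn_mk, dist1]; omega)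
      (fun w => hg.sx w.1 w.2) (x, y)
  · intro x y
    exact S_symm negyEq (fun a b => by simp only [negyEq, Equiv.coe_fn_mk, dist1]; omega)
      (fun w => hg.sy w.1 w.2) (x, y)
  · intro x y
    exact S_symm swEq (fun a b => by simp only [swEq, Equiv.coe_fn_mk, dist1]; omega)
      (fun w => hg.sw w.1 w.2) (x, y)
  · intro k x y hk hx
    exact pair_le g ρ' hρ (vEq k)
      (fun w => by simp only [vEq, Equiv.coe_fn_mk]; exact Prod.ext (by ring) rfl)
      (fun a b => by simp only [vEq, Equiv.coe_fn_mk, dist1]; omega)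
      (fun w => 2 * w.1 ≤ k) (fun w hw => by simp only [vEq, Equiv.coe_fn_mk]; omega)
      (x, y)
      (fun w hw => hg.pv k w.1 w.2 hk hw)
      (fun w hw => by simp only [vEq, Equiv.coe_fn_mk, dist1]; omega)
  · intro c x y hc hxy
    exact pair_le g ρ' hρ (aEq c)
      (fun w => by simp only [aEq, Equiv.coe_fn_mk]; exact Prod.ext (by ring) (by ring))
      (fun a b => by simp only [aEq, Equiv.coe_fn_mk, dist1]; omega)
      (fun w => w.1 - w.2 ≤ c) (fun w hw => by simp only [aEq, Equiv.coe_fn_mk]; omega)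
      (x, y)
      (fun w hw => hg.pa c w.1 w.2 hc hw)
      (fun w hw => by simp only [aEq, Equiv.coe_fn_mk, dist1]; omega)

/-! ### Divergence is global -/

/-- shrink an integer towards `0` by `c`. -/
def shrink (c : ℕ) (t : ℤ) : ℤ :=
  if (c : ℤ) < t then t - c else if t < -(c : ℤ) then t + c else 0

theorem shrink_cases (c : ℕ) (t : ℤ) :
    ((c : ℤ) < t ∧ shrink c t = t - c) ∨ (t < -(c : ℤ) ∧ shrink c t = t + c) ∨
      (-(c : ℤ) ≤ t ∧ t ≤ (c : ℤ) ∧ shrink c t = 0) := by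
  unfold shrink; split_ifs <;> omega

theorem shrink_natAbs (c : ℕ) (t : ℤ) : (shrink c t).natAbs ≤ t.natAbs - c := by
  unfold shrink; split_ifs <;> omega

/-- 2-to-1 compression of the `L∞` ball of radius `n` into the `L¹` ball of
radius `n + 1`. -/
def Tc (z : ℤ × ℤ) : ℤ × ℤ := ((z.1 + z.2) / 2, (z.1 - z.2 + 1) / 2)

def Zm (c : ℕ) (w : ℤ × ℤ) : ℤ × ℤ := (shrink c w.1, shrink c w.2)

def Phi (c : ℕ) (y w : ℤ × ℤ) : ℤ × ℤ := (y.1 + (Tc (Zm c w)).1, y.2 + (Tc (Zm c w)).2)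

def tag (c : ℕ) (w : ℤ × ℤ) : Fin 2 × Fin (2 * c + 1) × Fin (2 * c + 1) :=
  (⟨((Zm c w).1 + (Zm c w).2).natAbs % 2, by omega⟩,
    ⟨min (w.1 + c).toNat (2 * c), by omega⟩, ⟨min (w.2 + c).toNat (2 * c), by omega⟩)

set_option maxHeartbeats 1000000 in
theorem phi_tag_inj (c : ℕ) (y : ℤ × ℤ) :
    Function.Injective (fun w => (Phi c y w, tag c w)) := by
  intro w w' h
  obtain ⟨w1, w2⟩ := w
  obtain ⟨w1', w2'⟩ := w'
  have hA := congrArg (fun p : (ℤ × ℤ) × (Fin 2 × Fin (2 * c + 1) × Fin (2 * c + 1)) => p.1.1) h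
  have hB := congrArg (fun p : (ℤ × ℤ) × (Fin 2 × Fin (2 * c + 1) × Fin (2 * c + 1)) => p.1.2) h
  have hp := congrArg (fun p : (ℤ × ℤ) × (Fin 2 × Fin (2 * c + 1) × Fin (2 * c + 1)) => (p.2.1 : ℕ)) h
  have ht1 := congrArg (fun p : (ℤ × ℤ) × (Fin 2 × Fin (2 * c + 1) × Fin (2 * c + 1)) => (p.2.2.1 : ℕ)) h
  have ht2 := congrArg (fun p : (ℤ × ℤ) × (Fin 2 × Fin (2 * c + 1) × Fin (2 * c + 1)) => (p.2.2.2 : ℕ)) h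
  simp only [Phi, tag, Zm, Tc] at hA hB hp ht1 ht2
  have hs : shrink c w1 = shrink c w1' ∧ shrink c w2 = shrink c w2' := by omega
  have e1 : w1 = w1' := by
    have d1 := shrink_cases c w1
    have d1' := shrink_cases c w1'
    omega
  have e2 : w2 = w2' := by
    have d2 := shrink_cases c w2
    have d2' := shrink_cases c w2'
    omega
  rw [e1, e2]

theorem Tc_n1 (z : ℤ × ℤ) : n1 (Tc z) ≤ ninf z + 1 := by
  obtain ⟨z1, z2⟩ := z
  simp only [Tc, n1, ninf]
  omega

/-- If the kernel sum diverges at one point, it diverges everywhere. -/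
theorem div_transfer (g : ℤ × ℤ → ℝ≥0∞) (hfin : ∀ w, g w ≠ ⊤)
    (hmono : ∀ a b, n1 a ≤ ninf b → g b ≤ g a)
    (ρ' : ℕ → ℝ≥0∞) (hρ : Antitone ρ') (hρfin : ∀ n, ρ' n ≠ ⊤)
    (x y : ℤ × ℤ) (hx : S g ρ' x = ⊤) : S g ρ' y = ⊤ := by
  classical
  by_contra hy
  set c : ℕ := n1 x + n1 y + 1 with hc
  set tx : ℤ × ℤ → ℝ≥0∞ := fun w => g w * ρ' (dist1 w x) with htx
  set ty : ℤ × ℤ → ℝ≥0∞ := fun w => g w * ρ' (dist1 w y) with hty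
  set D : Set (ℤ × ℤ) := {w | c ≤ ninf w} with hD
  -- the terms are finite
  have hterm : ∀ w, tx w ≠ ⊤ := fun w => ENNReal.mul_ne_top (hfin w) (hρfin _)
  -- the complement of D is finite
  have hDc : (Dᶜ).Finite := by
    apply Set.Finite.subset (Set.finite_Icc ((-(c : ℤ), -(c : ℤ))) (((c : ℤ), (c : ℤ))))
    intro w hw
    simp only [hD, Set.mem_compl_iff, Set.mem_setOf_eq, not_le, ninf] at hw
    constructor <;> constructor <;> simp only [] <;> omega
  -- the sum over D diverges
  have hDsum : ∑' (w : D), tx w = ⊤ := by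
    have hsplit : ∑' (w : D), tx w + ∑' (w : ↑(Dᶜ)), tx w = ∑' w, tx w :=
      ENNReal.summable.tsum_add_tsum_compl (s := D) ENNReal.summable
    have hcfin : ∑' (w : ↑(Dᶜ)), tx w ≠ ⊤ := by
      haveI : Fintype ↑(Dᶜ) := hDc.fintype
      rw [tsum_fintype]
      refine (ENNReal.sum_lt_top.mpr ?_).ne
      intro w _
      exact (hterm (w : ℤ × ℤ)).lt_top
    by_contra h
    rw [S] at hx
    rw [← hsplit] at hx
    exact (ENNReal.add_ne_top.mpr ⟨h, hcfin⟩) hx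
  -- pointwise comparison on D
  have hpoint : ∀ w : ℤ × ℤ, c ≤ ninf w → tx w ≤ ty (Phi c y w) := by
    intro w hw
    have hZinf : ninf (Zm c w) ≤ ninf w - c := by
      have h1 := shrink_natAbs c w.1
      have h2 := shrink_natAbs c w.2
      simp only [Zm, ninf] at *
      omega
    have hT : n1 (Tc (Zm c w)) ≤ ninf w - c + 1 := le_trans (Tc_n1 _) (by omega)
    have hdist : dist1 (Phi c y w) y = n1 (Tc (Zm c w)) := by
      simp only [Phi, dist1, n1]
      omega
    have htri : ninf w ≤ dist1 w x + n1 x := by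
      obtain ⟨w1, w2⟩ := w
      obtain ⟨x1, x2⟩ := x
      simp only [dist1, n1, ninf]
      omega
    have hd : dist1 (Phi c y w) y ≤ dist1 w x := by
      rw [hdist]
      simp only [hc] at hw
      omega
    have hn1Φ : n1 (Phi c y w) ≤ ninf w := by
      have h5 : n1 (Phi c y w) ≤ n1 y + n1 (Tc (Zm c w)) := by
        simp only [Phi, n1]
        omega
      simp only [hc] at hw
      omega
    have hgle : g w ≤ g (Phi c y w) := hmono (Phi c y w) w hn1Φ
    exact mul_le_mul' hgle (hρ hd)
  -- hence the sum of `ty ∘ Phi` over `D` diverges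
  have hty_top : ∑' (w : D), ty (Phi c y (w : ℤ × ℤ)) = ⊤ := by
    have h6 := ENNReal.tsum_le_tsum (fun w : D => hpoint w w.2)
    rw [hDsum] at h6
    exact top_le_iff.mp h6
  -- but it is also at most a finite multiple of `S g ρ' y`
  have hcomp : ∑' (w : D), ty (Phi c y (w : ℤ × ℤ)) ≤
      ((2 * (2 * c + 1) * (2 * c + 1) : ℕ) : ℝ≥0∞) * S g ρ' y := by
    have hinj : Function.Injective
        (fun w : D => (Phi c y (w : ℤ × ℤ), tag c (w : ℤ × ℤ))) :=
      (phi_tag_inj c y).comp Subtype.val_injective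
    calc ∑' (w : D), ty (Phi c y (w : ℤ × ℤ))
        ≤ ∑' (p : (ℤ × ℤ) × (Fin 2 × Fin (2 * c + 1) × Fin (2 * c + 1))), ty p.1 :=
          ENNReal.tsum_comp_le_tsum_of_injective hinj (fun p => ty p.1)
      _ = ∑' (z : ℤ × ℤ), ∑' (_ : Fin 2 × Fin (2 * c + 1) × Fin (2 * c + 1)), ty z :=
          ENNReal.tsum_prod (f := fun z _ => ty z)
      _ = ∑' (z : ℤ × ℤ), ((2 * (2 * c + 1) * (2 * c + 1) : ℕ) : ℝ≥0∞) * ty z := by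
          refine tsum_congr fun z => ?_
          rw [tsum_fintype, Finset.sum_const, Finset.card_univ, nsmul_eq_mul]
          congr 1
          simp [Fintype.card_prod]
          ring
      _ = ((2 * (2 * c + 1) * (2 * c + 1) : ℕ) : ℝ≥0∞) * S g ρ' y := ENNReal.tsum_mul_left
  rw [hty_top] at hcomp
  exact (ENNReal.mul_ne_top (ENNReal.natCast_ne_top _) hy) (top_le_iff.mp hcomp)

/-! ### Relating real and extended–real sums -/

theorem tsum_eq_toReal {f : ℤ × ℤ → ℝ} (hf : ∀ i, 0 ≤ f i) :
    ∑' i, f i = (∑' i, ENNReal.ofReal (f i)).toReal := by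
  by_cases hs : Summable f
  · rw [← ENNReal.ofReal_tsum_of_nonneg hf hs, ENNReal.toReal_ofReal (tsum_nonneg hf)]
  · rw [tsum_eq_zero_of_not_summable hs]
    have htop : ∑' i, ENNReal.ofReal (f i) = ⊤ := by
      by_contra h
      have h2 := ENNReal.summable_toReal h
      have h3 : (fun i => (ENNReal.ofReal (f i)).toReal) = f :=
        funext fun i => ENNReal.toReal_ofReal (hf i)
      rw [h3] at h2
      exact hs h2
    rw [htop]
    simp

/-! ### The invariant holds at time 0 and is preserved -/

theorem base_inv : Inv (fun u : ℤ × ℤ => if u = ((0 : ℤ), (0 : ℤ)) then (1 : ℝ) else 0) := by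
  have npos : ∀ a b : ℤ, (0 : ℝ) ≤ if (a, b) = ((0 : ℤ), (0 : ℤ)) then (1 : ℝ) else 0 := by
    intro a b
    split <;> norm_num
  constructor
  · intro x y
    have h : ((-x, y) = ((0 : ℤ), (0 : ℤ))) ↔ ((x, y) = ((0 : ℤ), (0 : ℤ))) := by
      simp only [Prod.mk.injEq, neg_eq_zero]
    exact if_congr h rfl rfl
  · intro x y
    have h : ((x, -y) = ((0 : ℤ), (0 : ℤ))) ↔ ((x, y) = ((0 : ℤ), (0 : ℤ))) := by
      simp only [Prod.mk.injEq, neg_eq_zero]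
    exact if_congr h rfl rfl
  · intro x y
    have h : ((y, x) = ((0 : ℤ), (0 : ℤ))) ↔ ((x, y) = ((0 : ℤ), (0 : ℤ))) := by
      simp only [Prod.mk.injEq]
      tauto
    exact if_congr h rfl rfl
  · intro k x y hk hx
    by_cases h1 : ((k - x, y) = ((0 : ℤ), (0 : ℤ)))
    · exfalso
      rw [Prod.mk.injEq] at h1
      omega
    · show (if ((k - x, y) = ((0 : ℤ), (0 : ℤ))) then (1 : ℝ) else 0) ≤ _
      rw [if_neg h1]
      exact npos x y
  · intro c x y hc hxy
    by_cases h1 : ((y + c, x - c) = ((0 : ℤ), (0 : ℤ)))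
    · exfalso
      rw [Prod.mk.injEq] at h1
      omega
    · show (if ((y + c, x - c) = ((0 : ℤ), (0 : ℤ))) then (1 : ℝ) else 0) ≤ _
      rw [if_neg h1]
      exact npos x y

theorem step_inv (pt q : ℤ × ℤ → ℝ) (ρ : ℕ → ℝ)
    (hρ0 : ∀ n, 0 ≤ ρ n) (hρmono : Antitone ρ)
    (hq : ∀ v, q v = ∑' w : ℤ × ℤ, pt w * ρ (dist1 w v))
    (hI : Inv pt) (hpos : ∀ w, 0 ≤ pt w) :
    Inv q ∧ ∀ w, 0 ≤ q w := by
  set g : ℤ × ℤ → ℝ≥0∞ := fun w => ENNReal.ofReal (pt w) with hg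
  set ρ' : ℕ → ℝ≥0∞ := fun n => ENNReal.ofReal (ρ n) with hρ'
  have hρ'anti : Antitone ρ' := fun a b h => ENNReal.ofReal_le_ofReal (hρmono h)
  have hgI : Inv g := by
    constructor
    · intro x y; exact congrArg ENNReal.ofReal (hI.sx x y)
    · intro x y; exact congrArg ENNReal.ofReal (hI.sy x y)
    · intro x y; exact congrArg ENNReal.ofReal (hI.sw x y)
    · intro k x y hk hx; exact ENNReal.ofReal_le_ofReal (hI.pv k x y hk hx)
    · intro c x y hc hxy; exact ENNReal.ofReal_le_ofReal (hI.pa c x y hc hxy)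
  have key : ∀ x, q x = (S g ρ' x).toReal := by
    intro x
    rw [hq x, tsum_eq_toReal (fun w => mul_nonneg (hpos w) (hρ0 _))]
    congr 1
    exact tsum_congr fun w => ENNReal.ofReal_mul (hpos w)
  have hSI : Inv (S g ρ') := S_inv hρ'anti hgI
  have hdiv : ∀ a b : ℤ × ℤ, S g ρ' a = ⊤ → S g ρ' b = ⊤ :=
    div_transfer g (fun w => ENNReal.ofReal_ne_top)
      (fun a b hab => hgI.mono a b hab) ρ' hρ'anti (fun n => ENNReal.ofReal_ne_top)
  have hle : ∀ a b : ℤ × ℤ, S g ρ' b ≤ S g ρ' a → q b ≤ q a := by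
    intro a b h
    rw [key, key]
    by_cases ha : S g ρ' a = ⊤
    · rw [ha, hdiv a b ha]
    · exact ENNReal.toReal_mono ha h
  refine ⟨⟨?_, ?_, ?_, ?_, ?_⟩, fun w => by rw [key]; exact ENNReal.toReal_nonneg⟩
  · intro x y; rw [key, key, hSI.sx x y]
  · intro x y; rw [key, key, hSI.sy x y]
  · intro x y; rw [key, key, hSI.sw x y]
  · intro k x y hk hx; exact hle _ _ (hSI.pv k x y hk hx)
  · intro c x y hc hxy; exact hle _ _ (hSI.pa c x y hc hxy)

end Stmt11Aux

/-- Monotonicity property of monotone radial jump processes on `ℤ²`.  A monotone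
radial process started at the origin is described by its distributions
`p t : ℤ² → ℝ` (`p t u = P(J_t = u)`): `p 0` is the point mass at the origin and
`p (t+1) v = ∑_w p t w · ρ(‖w − v‖₁)` for a non-increasing function `ρ : ℕ → [0,1]`.
Then for all `u v : ℤ²` with `‖u‖₁ ≤ ‖v‖_∞` and all `t`, `P(J_t = u) ≥ P(J_t = v)`. -/
theorem stmt_11 (p : ℕ → ℤ × ℤ → ℝ) (ρ : ℕ → ℝ)
    (hρ0 : ∀ n, 0 ≤ ρ n) (hρ1 : ∀ n, ρ n ≤ 1) (hρmono : Antitone ρ)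
    (h0 : p 0 = fun u => if u = (0, 0) then 1 else 0)
    (hstep : ∀ t v, p (t + 1) v = ∑' w : ℤ × ℤ, p t w * ρ (dist1 w v))
    (u v : ℤ × ℤ)
    (huv : u.1.natAbs + u.2.natAbs ≤ max v.1.natAbs v.2.natAbs)
    (t : ℕ) :
    p t v ≤ p t u := by
  have main : ∀ s : ℕ, Stmt11Aux.Inv (p s) ∧ ∀ w, 0 ≤ p s w := by
    intro s
    induction s with
    | zero =>
      rw [h0]
      refine ⟨Stmt11Aux.base_inv, fun w => ?_⟩
      dsimp only
      split <;> norm_num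
    | succ n ih =>
      exact Stmt11Aux.step_inv (p n) (p (n + 1)) ρ hρ0 hρmono (hstep n) ih.1 ih.2
  exact (main t).1.mono u v huv
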